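/- arXiv:0804.4268 — 2 statements merged into one kernel-verified Lean document; each statement's English description precedes it below -/
import Mathlib

section
/- For each positive integer n, the sum over all 3-ary (ternary) trees T with n internal vertices of the product over all internal vertices v of T of (2/3 + 1/(3 h_v)) equals (2n+1)^(n-1)/n!, where h_v is the number of internal vertices in the subtree rooted at v. -/
/-- A ternary (3-ary) tree: every internal vertex has exactly three ordered
children, each of which is a leaf or an internal vertex. -/
inductive TernaryTree where
  | leaf : TernaryTree
  | node : TernaryTree → TernaryTree → TernaryTree → TernaryTree

/-- Number of internal vertices of a ternary tree. -/
def TernaryTree.isize : TernaryTree → ℕ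
  | .leaf => 0
  | .node a b c => a.isize + b.isize + c.isize + 1

/-- The multiset of hook lengths of the internal vertices of a ternary tree
(the hook length of an internal vertex is the number of internal vertices in
the subtree rooted at it, including itself). -/
def TernaryTree.hooks : TernaryTree → Multiset ℕ
  | .leaf => 0
  | .node a b c => (TernaryTree.node a b c).isize ::ₘ (a.hooks + b.hooks + c.hooks)


noncomputable def abelA (n : ℕ) (x : ℝ) : ℝ := if n = 0 then 1 else x * (x + 2*n)^(n-1)

lemma abelA_zero (x : ℝ) : abelA 0 x = 1 := rfl

lemma abelA_succ (n : ℕ) (x : ℝ) : abelA (n+1) x = x * (x + 2*(n+1))^n := by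
  simp [abelA]

lemma abelA_apply_zero (n : ℕ) (hn : n ≠ 0) : abelA n 0 = 0 := by
  simp [abelA, hn]

lemma abelA_hasDerivAt (n : ℕ) (x : ℝ) :
    HasDerivAt (abelA (n+1)) ((n+1) * abelA n (x+2)) x := by
  have h : HasDerivAt (fun x : ℝ => x * (x + 2*((n:ℝ)+1))^n)
      (1 * (x + 2*((n:ℝ)+1))^n + x * (n * (x + 2*((n:ℝ)+1))^(n-1) * 1)) x :=
    (hasDerivAt_id x).mul (((hasDerivAt_id x).add_const (2*((n:ℝ)+1))).pow n)
  have h2 : HasDerivAt (abelA (n+1))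
      (1 * (x + 2*((n:ℝ)+1))^n + x * (n * (x + 2*((n:ℝ)+1))^(n-1) * 1)) x := by
    refine h.congr_of_eventuallyEq ?_
    filter_upwards with y
    rw [abelA_succ]
  convert h2 using 1
  push_cast
  rcases Nat.eq_zero_or_pos n with h0 | h0
  · subst h0; simp [abelA]
  · have hne : n ≠ 0 := h0.ne'
    have hpow : (x + 2*((n:ℝ)+1))^n = (x + 2*((n:ℝ)+1))^(n-1) * (x + 2*((n:ℝ)+1)) := by
      rw [← pow_succ, Nat.sub_add_cancel h0]
    rw [abelA]
    simp only [hne, if_false]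
    have he : (x + 2 + 2*(n:ℝ)) = x + 2*((n:ℝ)+1) := by ring
    rw [he, hpow]
    ring

lemma abelA_binomial (n : ℕ) (x y : ℝ) :
    abelA n (x + y) = ∑ k ∈ Finset.range (n+1),
      (n.choose k : ℝ) * abelA k x * abelA (n-k) y := by
  induction n generalizing x y with
  | zero => simp [abelA_zero]
  | succ n ih =>
    set g : ℝ → ℝ := fun x => abelA (n+1) (x+y)
      - ∑ k ∈ Finset.range (n+2), (((n+1).choose k : ℕ) : ℝ) * abelA k x * abelA (n+1-k) y
      with hgdef
    have hderiv : ∀ x : ℝ, HasDerivAt g 0 x := by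
      intro x
      have h1 : HasDerivAt (fun x : ℝ => abelA (n+1) (x+y)) (((n:ℝ)+1) * abelA n ((x+y)+2)) x := by
        have := (abelA_hasDerivAt n (x+y)).comp x ((hasDerivAt_id x).add_const y)
        simpa [Function.comp_def] using this
      have h2 : ∀ k ∈ Finset.range (n+2),
          HasDerivAt (fun x : ℝ => (((n+1).choose k : ℕ) : ℝ) * abelA k x * abelA (n+1-k) y)
          ((((n+1).choose k : ℕ) : ℝ) * ((k:ℝ) * abelA (k-1) (x+2)) * abelA (n+1-k) y) x := by
        intro k _
        cases k with
        | zero =>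
          have := hasDerivAt_const (𝕜 := ℝ) x ((((n+1).choose 0 : ℕ) : ℝ) * abelA 0 x * abelA (n+1-0) y)
          convert this using 2
          · rfl
          · rfl
          · simp [abelA_zero]
          · simp [abelA_zero]
        | succ j =>
          have h := ((abelA_hasDerivAt j x).const_mul ((((n+1).choose (j+1) : ℕ)) : ℝ)).mul_const
            (abelA (n+1-(j+1)) y)
          convert h using 1
          · rfl
          · rfl
          simp only [Nat.succ_sub_one, Nat.cast_add, Nat.cast_one]
          (try ring)
      have hsum := HasDerivAt.sum h2
      have hkey : ∑ k ∈ Finset.range (n+2),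
          ((((n+1).choose k : ℕ) : ℝ) * ((k:ℝ) * abelA (k-1) (x+2)) * abelA (n+1-k) y)
          = ((n:ℝ)+1) * abelA n ((x+y)+2) := by
        rw [Finset.sum_range_succ']
        simp only [Nat.succ_sub_succ_eq_sub, Nat.add_sub_cancel, Nat.cast_add, Nat.cast_one,
          Nat.cast_zero, zero_mul, mul_zero, add_zero]
        have hterm : ∀ k, (((n+1).choose (k+1) : ℕ) : ℝ) * (((k:ℝ)+1) * abelA k (x+2)) * abelA (n-k) y
            = ((n:ℝ)+1) * ((n.choose k : ℝ) * abelA k (x+2) * abelA (n-k) y) := by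
          intro k
          have hc : ((n+1).choose (k+1) : ℕ) * (k+1) = (n+1) * n.choose k := by
            rw [← Nat.add_one_mul_choose_eq]
          have hc' : ((((n+1).choose (k+1) : ℕ)) : ℝ) * ((k:ℝ)+1) = ((n:ℝ)+1) * (n.choose k : ℝ) := by
            have := congrArg (Nat.cast : ℕ → ℝ) hc
            push_cast at this
            linarith [this]
          calc (((n+1).choose (k+1) : ℕ) : ℝ) * (((k:ℝ)+1) * abelA k (x+2)) * abelA (n-k) y
              = ((((n+1).choose (k+1) : ℕ) : ℝ) * ((k:ℝ)+1)) * abelA k (x+2) * abelA (n-k) y := by ring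
            _ = _ := by rw [hc']; ring
        calc ∑ k ∈ Finset.range (n+1),
              (((n+1).choose (k+1) : ℕ) : ℝ) * (((k:ℝ)+1) * abelA k (x+2)) * abelA (n-k) y
            = ∑ k ∈ Finset.range (n+1), ((n:ℝ)+1) * ((n.choose k : ℝ) * abelA k (x+2) * abelA (n-k) y) := by
              apply Finset.sum_congr rfl; intro k _; exact hterm k
          _ = ((n:ℝ)+1) * ∑ k ∈ Finset.range (n+1), (n.choose k : ℝ) * abelA k (x+2) * abelA (n-k) y := by
              rw [Finset.mul_sum]
          _ = ((n:ℝ)+1) * abelA n ((x+2)+y) := by rw [← ih]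
          _ = ((n:ℝ)+1) * abelA n ((x+y)+2) := by ring_nf
      have := h1.sub hsum
      rw [hkey, sub_self] at this
      refine HasDerivAt.congr_of_eventuallyEq this ?_
      filter_upwards with z
      simp [hgdef, Finset.sum_apply]
    have hdiff : Differentiable ℝ g := fun x => (hderiv x).differentiableAt
    have hconst := is_const_of_deriv_eq_zero hdiff (fun x => (hderiv x).deriv) x 0
    have hg0 : g 0 = 0 := by
      simp only [hgdef, zero_add]
      rw [Finset.sum_eq_single 0]
      · simp [abelA_zero]
      · intro k _ hk
        rw [abelA_apply_zero k hk]; ring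
      · intro h; simp at h
    have : g x = 0 := hconst.trans hg0
    have := sub_eq_zero.mp this
    convert this using 1

deriving instance DecidableEq for TernaryTree

/-- The finset of ternary trees with `n` internal vertices. -/
def treeFinset : ℕ → Finset TernaryTree
  | 0 => {TernaryTree.leaf}
  | (n+1) =>
    (Finset.HasAntidiagonal.antidiagonal n).attach.biUnion fun p =>
      (Finset.HasAntidiagonal.antidiagonal p.1.2).attach.biUnion fun q =>
        ((treeFinset p.1.1 ×ˢ treeFinset q.1.1) ×ˢ treeFinset q.1.2).image
          fun t => TernaryTree.node t.1.1 t.1.2 t.2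
termination_by n => n
decreasing_by
  · have := Finset.HasAntidiagonal.mem_antidiagonal.mp p.2; omega
  · have hp := Finset.HasAntidiagonal.mem_antidiagonal.mp p.2
    have hq := Finset.HasAntidiagonal.mem_antidiagonal.mp q.2; omega
  · have hp := Finset.HasAntidiagonal.mem_antidiagonal.mp p.2
    have hq := Finset.HasAntidiagonal.mem_antidiagonal.mp q.2; omega

lemma mem_treeFinset : ∀ (T : TernaryTree) (n : ℕ), T ∈ treeFinset n ↔ T.isize = n := by
  intro T
  induction T with
  | leaf =>
    intro n
    cases n with
    | zero => simp [treeFinset, TernaryTree.isize]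
    | succ n =>
      simp only [treeFinset, Finset.mem_biUnion, Finset.mem_image, TernaryTree.isize]
      constructor
      · rintro ⟨p, -, q, -, t, -, h⟩; exact absurd h (by simp)
      · omega
  | node a b c iha ihb ihc =>
    intro n
    cases n with
    | zero =>
      simp only [treeFinset, Finset.mem_singleton, TernaryTree.isize]
      constructor
      · intro h; exact absurd h (by simp)
      · omega
    | succ n =>
      simp only [treeFinset, Finset.mem_biUnion, Finset.mem_image]
      constructor
      · rintro ⟨p, -, q, -, t, ht, h⟩
        obtain ⟨h12, h3⟩ := Finset.mem_product.mp ht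
        obtain ⟨h1, h2⟩ := Finset.mem_product.mp h12
        cases h
        have ea := (iha _).mp h1
        have eb := (ihb _).mp h2
        have ec := (ihc _).mp h3
        have hp := Finset.HasAntidiagonal.mem_antidiagonal.mp p.2
        have hq := Finset.HasAntidiagonal.mem_antidiagonal.mp q.2
        simp only [TernaryTree.isize]
        omega
      · intro h
        simp only [TernaryTree.isize] at h
        refine ⟨⟨(a.isize, b.isize + c.isize), Finset.HasAntidiagonal.mem_antidiagonal.mpr (by omega)⟩,
          Finset.mem_attach _ _,
          ⟨(b.isize, c.isize), Finset.HasAntidiagonal.mem_antidiagonal.mpr rfl⟩, Finset.mem_attach _ _,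
          ((a, b), c), ?_, rfl⟩
        refine Finset.mem_product.mpr ⟨Finset.mem_product.mpr ⟨?_, ?_⟩, ?_⟩
        · exact (iha _).mpr rfl
        · exact (ihb _).mpr rfl
        · exact (ihc _).mpr rfl

noncomputable def W (T : TernaryTree) : ℝ :=
  ((T.hooks).map (fun h => (2 : ℝ) / 3 + 1 / (3 * h))).prod

lemma W_map (T : TernaryTree) :
    W T = ((T.hooks).map (fun h : ℕ => (2:ℝ)/3 + 1/(3*(h:ℝ)))).prod := by
  simp only [W]
  rw [show (do let a ← T.hooks; pure ((a:ℝ)) : Multiset ℝ)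
      = Multiset.map (Nat.cast : ℕ → ℝ) T.hooks by
    simp [Bind.bind, Multiset.bind_singleton], Multiset.map_map]
  rfl

lemma W_leaf : W .leaf = 1 := by rw [W_map, TernaryTree.hooks]; simp

lemma W_node (a b c : TernaryTree) :
    W (.node a b c)
      = (2/3 + 1/(3*((a.isize + b.isize + c.isize + 1 : ℕ) : ℝ))) * (W a * W b * W c) := by
  rw [W_map, W_map, W_map, W_map, TernaryTree.hooks, Multiset.map_cons, Multiset.prod_cons,
    Multiset.map_add, Multiset.map_add, Multiset.prod_add, Multiset.prod_add,
    show (TernaryTree.node a b c).isize = a.isize + b.isize + c.isize + 1 from rfl]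
  (try push_cast)
  (try ring)

noncomputable def F (n : ℕ) : ℝ := ∑ T ∈ treeFinset n, W T

lemma F_zero : F 0 = 1 := by simp [F, treeFinset, W_leaf]

def piece (i j k : ℕ) : Finset TernaryTree :=
  ((treeFinset i ×ˢ treeFinset j) ×ˢ treeFinset k).image fun t => TernaryTree.node t.1.1 t.1.2 t.2

lemma node_inj : Function.Injective
    (fun t : (TernaryTree × TernaryTree) × TernaryTree => TernaryTree.node t.1.1 t.1.2 t.2) := by
  rintro ⟨⟨a, b⟩, c⟩ ⟨⟨a', b'⟩, c'⟩ h
  simp only [TernaryTree.node.injEq] at h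
  obtain ⟨h1, h2, h3⟩ := h
  simp [h1, h2, h3]

lemma mem_piece {T : TernaryTree} {i j k : ℕ} :
    T ∈ piece i j k ↔ ∃ a b c, T = TernaryTree.node a b c
      ∧ a.isize = i ∧ b.isize = j ∧ c.isize = k := by
  simp only [piece, Finset.mem_image, Finset.mem_product, mem_treeFinset]
  constructor
  · rintro ⟨⟨⟨a, b⟩, c⟩, ⟨⟨h1, h2⟩, h3⟩, rfl⟩
    exact ⟨a, b, c, rfl, h1, h2, h3⟩
  · rintro ⟨a, b, c, rfl, h1, h2, h3⟩
    exact ⟨((a, b), c), ⟨⟨h1, h2⟩, h3⟩, rfl⟩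

lemma sum_piece (i j k : ℕ) :
    ∑ T ∈ piece i j k, W T
      = (2/3 + 1/(3*((i + j + k + 1 : ℕ) : ℝ))) * (F i * F j * F k) := by
  rw [piece, Finset.sum_image (fun x _ y _ h => node_inj h)]
  have h1 : ∀ t ∈ (treeFinset i ×ˢ treeFinset j) ×ˢ treeFinset k,
      W (TernaryTree.node t.1.1 t.1.2 t.2)
        = (2/3 + 1/(3*((i + j + k + 1 : ℕ) : ℝ))) * (W t.1.1 * W t.1.2 * W t.2) := by
    rintro ⟨⟨a, b⟩, c⟩ ht
    obtain ⟨h12, h3⟩ := Finset.mem_product.mp ht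
    obtain ⟨h1, h2⟩ := Finset.mem_product.mp h12
    rw [W_node, (mem_treeFinset a i).mp h1, (mem_treeFinset b j).mp h2,
      (mem_treeFinset c k).mp h3]
  rw [Finset.sum_congr rfl h1, ← Finset.mul_sum]
  congr 1
  rw [Finset.sum_product, Finset.sum_product]
  simp only [← Finset.sum_mul, ← Finset.mul_sum]
  simp only [F]
  (try ring)

lemma F_succ (n : ℕ) :
    F (n+1) = ∑ p ∈ Finset.HasAntidiagonal.antidiagonal n, ∑ q ∈ Finset.HasAntidiagonal.antidiagonal p.2,
      (2/3 + 1/(3*((n:ℝ)+1))) * (F p.1 * (F q.1 * F q.2)) := by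
  have hTF : treeFinset (n+1) = (Finset.HasAntidiagonal.antidiagonal n).attach.biUnion fun p =>
      (Finset.HasAntidiagonal.antidiagonal p.1.2).attach.biUnion fun q => piece p.1.1 q.1.1 q.1.2 := by
    rw [treeFinset]; rfl
  have hdisj2 : ∀ p : {x // x ∈ Finset.HasAntidiagonal.antidiagonal n},
      Set.PairwiseDisjoint (((Finset.HasAntidiagonal.antidiagonal p.1.2).attach :
          Finset {x // x ∈ Finset.HasAntidiagonal.antidiagonal p.1.2}) : Set {x // x ∈ Finset.HasAntidiagonal.antidiagonal p.1.2})
        (fun q : {x // x ∈ Finset.HasAntidiagonal.antidiagonal p.1.2} => piece p.1.1 q.1.1 q.1.2) := by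
    intro p q _ q' _ hne
    rw [Function.onFun, Finset.disjoint_left]
    intro T hT hT'
    obtain ⟨a, b, c, rfl, e1, e2, e3⟩ := mem_piece.mp hT
    obtain ⟨a', b', c', heq, f1, f2, f3⟩ := mem_piece.mp hT'
    obtain ⟨rfl, rfl, rfl⟩ := TernaryTree.node.inj heq
    exact hne (Subtype.ext (Prod.ext (by omega) (by omega)))
  have hdisj1 : Set.PairwiseDisjoint
      (((Finset.HasAntidiagonal.antidiagonal n).attach : Finset {x // x ∈ Finset.HasAntidiagonal.antidiagonal n}) :
        Set {x // x ∈ Finset.HasAntidiagonal.antidiagonal n})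
      (fun p : {x // x ∈ Finset.HasAntidiagonal.antidiagonal n} =>
        (Finset.HasAntidiagonal.antidiagonal p.1.2).attach.biUnion fun q => piece p.1.1 q.1.1 q.1.2) := by
    intro p _ p' _ hne
    rw [Function.onFun, Finset.disjoint_left]
    intro T hT hT'
    simp only [Finset.mem_biUnion] at hT hT'
    obtain ⟨q, -, hq⟩ := hT
    obtain ⟨q', -, hq'⟩ := hT'
    obtain ⟨a, b, c, rfl, e1, e2, e3⟩ := mem_piece.mp hq
    obtain ⟨a', b', c', heq, f1, f2, f3⟩ := mem_piece.mp hq'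
    obtain ⟨rfl, rfl, rfl⟩ := TernaryTree.node.inj heq
    have hq2 := Finset.HasAntidiagonal.mem_antidiagonal.mp q.2
    have hq2' := Finset.HasAntidiagonal.mem_antidiagonal.mp q'.2
    exact hne (Subtype.ext (Prod.ext (by omega) (by omega)))
  have step1 : ∀ p ∈ (Finset.HasAntidiagonal.antidiagonal n).attach,
      (∑ T ∈ (Finset.HasAntidiagonal.antidiagonal p.1.2).attach.biUnion
          (fun q => piece p.1.1 q.1.1 q.1.2), W T)
        = ∑ q ∈ (Finset.HasAntidiagonal.antidiagonal p.1.2).attach,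
            (2/3 + 1/(3*((n:ℝ)+1))) * (F p.1.1 * (F q.1.1 * F q.1.2)) := by
    intro p _
    rw [Finset.sum_biUnion (hdisj2 p)]
    refine Finset.sum_congr rfl fun q _ => ?_
    rw [sum_piece]
    have hsz : p.1.1 + q.1.1 + q.1.2 + 1 = n+1 := by
      have hp := Finset.HasAntidiagonal.mem_antidiagonal.mp p.2
      have hq := Finset.HasAntidiagonal.mem_antidiagonal.mp q.2
      omega
    rw [hsz]
    push_cast
    ring
  rw [F, hTF, Finset.sum_biUnion hdisj1, Finset.sum_congr rfl step1]
  rw [Finset.sum_attach (Finset.HasAntidiagonal.antidiagonal n)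
    (fun p => ∑ q ∈ (Finset.HasAntidiagonal.antidiagonal p.2).attach,
      (2/3 + 1/(3*((n:ℝ)+1))) * (F p.1 * (F q.1.1 * F q.1.2)))]
  refine Finset.sum_congr rfl fun p _ => ?_
  rw [Finset.sum_attach (Finset.HasAntidiagonal.antidiagonal p.2)
    (fun q => (2/3 + 1/(3*((n:ℝ)+1))) * (F p.1 * (F q.1 * F q.2)))]


lemma abelA_antidiagonal (x y : ℝ) (m : ℕ) :
    ∑ q ∈ Finset.HasAntidiagonal.antidiagonal m,
        (abelA q.1 x / q.1.factorial) * (abelA q.2 y / q.2.factorial)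
      = abelA m (x+y) / m.factorial := by
  rw [Finset.Nat.sum_antidiagonal_eq_sum_range_succ
    (fun a b => (abelA a x / a.factorial) * (abelA b y / b.factorial))]
  rw [abelA_binomial m x y, Finset.sum_div]
  refine Finset.sum_congr rfl fun k hk => ?_
  have hk' : k ≤ m := Nat.lt_succ_iff.mp (Finset.mem_range.mp hk)
  rw [Nat.cast_choose ℝ hk']
  have h1 : (k.factorial : ℝ) ≠ 0 := Nat.cast_ne_zero.mpr (Nat.factorial_ne_zero k)
  have h2 : ((m-k).factorial : ℝ) ≠ 0 := Nat.cast_ne_zero.mpr (Nat.factorial_ne_zero _)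
  have h3 : (m.factorial : ℝ) ≠ 0 := Nat.cast_ne_zero.mpr (Nat.factorial_ne_zero m)
  field_simp

lemma F_eq (n : ℕ) : F n = abelA n 1 / n.factorial := by
  induction n using Nat.strong_induction_on with
  | _ n ih =>
    match n with
    | 0 => rw [F_zero]; simp [abelA_zero]
    | (m+1) =>
      rw [F_succ m]
      set c : ℝ := 2/3 + 1/(3*((m:ℝ)+1)) with hc
      have h1 : ∀ p ∈ Finset.HasAntidiagonal.antidiagonal m,
          ∑ q ∈ Finset.HasAntidiagonal.antidiagonal p.2, c * (F p.1 * (F q.1 * F q.2))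
            = c * ((abelA p.1 1 / p.1.factorial) * (abelA p.2 2 / p.2.factorial)) := by
        intro p hp
        have hpm := Finset.HasAntidiagonal.mem_antidiagonal.mp hp
        have hbody : ∀ q ∈ Finset.HasAntidiagonal.antidiagonal p.2,
            c * (F p.1 * (F q.1 * F q.2))
              = c * ((abelA p.1 1 / p.1.factorial) *
                  ((abelA q.1 1 / q.1.factorial) * (abelA q.2 1 / q.2.factorial))) := by
          intro q hq
          have hqm := Finset.HasAntidiagonal.mem_antidiagonal.mp hq
          rw [ih p.1 (by omega), ih q.1 (by omega), ih q.2 (by omega)]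
        rw [Finset.sum_congr rfl hbody]
        simp only [← Finset.mul_sum]
        rw [abelA_antidiagonal 1 1 p.2]
        norm_num
      rw [Finset.sum_congr rfl h1]
      simp only [← Finset.mul_sum]
      rw [abelA_antidiagonal 1 2 m]
      norm_num
      -- now : c * (abelA m 3 / m!) = abelA (m+1) 1 / (m+1)!
      rcases Nat.eq_zero_or_pos m with rfl | hm
      · simp [hc, abelA, Nat.factorial]; norm_num
      · have hne : m ≠ 0 := hm.ne'
        rw [abelA_succ m 1]
        rw [show abelA m 3 = 3 * (3 + 2*(m:ℝ))^(m-1) by rw [abelA]; simp [hne]; (try ring_nf)]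
        have hpow : (1 + 2*((m:ℝ)+1))^m
            = (1 + 2*((m:ℝ)+1))^(m-1) * (1 + 2*((m:ℝ)+1)) := by
          rw [← pow_succ, Nat.sub_add_cancel hm]
        rw [Nat.factorial_succ]
        have hf : (m.factorial : ℝ) ≠ 0 := Nat.cast_ne_zero.mpr (Nat.factorial_ne_zero m)
        have hm1 : ((m:ℝ)+1) ≠ 0 := by positivity
        have h30 : (3:ℝ) + (m:ℝ)*3 ≠ 0 := by positivity
        have h31 : (3:ℝ)*((m:ℝ)+1) ≠ 0 := by positivity
        push_cast
        rw [show (1:ℝ) + 2*((m:ℝ)+1) = 3 + 2*(m:ℝ) by ring] at hpow ⊢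
        rw [hpow]
        field_simp [hf, hm1, h30, h31]
        have hkey : ((3:ℝ)+(m:ℝ)*3)⁻¹ * (3*((m:ℝ)+1)) = 1 := by
          rw [show (3:ℝ)*((m:ℝ)+1) = 3+(m:ℝ)*3 by ring]
          exact inv_mul_cancel₀ h30
        rw [hc]; field_simp; ring

/-- Proposition 4 (Du–Liu): hook length formula for ternary trees. -/
theorem du_liu_ternary (n : ℕ) (hn : 1 ≤ n) :
    ∑' T : {T : TernaryTree // T.isize = n},
      ((T.1.hooks).map (fun h => (2 : ℝ) / 3 + 1 / (3 * h))).prod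
      = (2 * (n : ℝ) + 1) ^ (n - 1) / (Nat.factorial n : ℝ) := by
  haveI : Fintype {T : TernaryTree // T.isize = n} :=
    Fintype.subtype (treeFinset n) (fun T => mem_treeFinset T n)
  rw [tsum_fintype]
  have hsum : ∑ T : {T : TernaryTree // T.isize = n},
      ((T.1.hooks).map (fun h => (2 : ℝ) / 3 + 1 / (3 * h))).prod = F n := by
    rw [F, Finset.sum_subtype (treeFinset n) (fun T => mem_treeFinset T n) W]
    rfl
  rw [hsum, F_eq n]
  have hne : n ≠ 0 := by omega
  rw [abelA]
  simp only [hne, if_false]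
  rw [show (1:ℝ) + 2*(n:ℝ) = 2*(n:ℝ) + 1 by ring]
  ring
end

section
/- For each positive integer n, specializing z = 1 in Han's formula: the sum over all binary trees T with n vertices of the product over vertices v of (1+h_v)^(h_v-1)/(h_v*(h_v+1)^(h_v-2)) equals 2^n (n+1)^(n-1)/n!, and each factor (1+h_v)^(h_v-1)/(h_v*(h_v+1)^(h_v-2)) simplifies to 1 + 1/h_v. -/
/-- A binary tree: `nil` is the empty tree, `node l r` is a vertex with
(possibly empty) left subtree `l` and right subtree `r`. -/
inductive BinTree where
  | nil : BinTree
  | node : BinTree → BinTree → BinTree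

/-- Number of vertices of a binary tree. -/
def BinTree.size : BinTree → ℕ
  | .nil => 0
  | .node l r => l.size + r.size + 1

/-- The multiset of hook lengths of the vertices of a binary tree
(the hook length of a vertex is the number of vertices of the subtree
rooted at it, including itself). -/
def BinTree.hooks : BinTree → Multiset ℕ
  | .nil => 0
  | .node l r => (BinTree.node l r).size ::ₘ (l.hooks + r.hooks)

open Finset



lemma momM : ∀ i m : ℕ, i < m → ∑ k ∈ range (m+1), (-1:ℝ)^k * (m.choose k) * (k:ℝ)^i = 0 := by
  intro i
  induction i using Nat.strong_induction_on with
  | _ i ih =>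
    intro m him
    match i with
    | 0 =>
      have h := Int.alternating_sum_range_choose (n := m)
      rw [if_neg (by omega)] at h
      have : ((∑ k ∈ range (m+1), (-1:ℤ)^k * (m.choose k) : ℤ) : ℝ) = 0 := by rw [h]; norm_num
      push_cast at this
      simpa using this
    | j + 1 =>
      obtain ⟨m', rfl⟩ : ∃ m', m = m' + 1 := ⟨m - 1, by omega⟩
      rw [Finset.sum_range_succ']
      simp only [Nat.cast_zero, ne_eq]
      rw [zero_pow (by omega)]
      have key : ∀ k ∈ range (m'+1), (-1:ℝ)^(k+1) * ((m'+1).choose (k+1)) * ((k:ℝ)+1)^(j+1)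
          = -((m'+1:ℝ)) * ((-1:ℝ)^k * (m'.choose k) * ((k:ℝ)+1)^j) := by
        intro k hk
        have hc : (m'+1) * (m'.choose k) = ((m'+1).choose (k+1)) * (k+1) := Nat.add_one_mul_choose_eq m' k
        have hcr : ((m'+1:ℝ)) * (m'.choose k) = ((m'+1).choose (k+1)) * ((k:ℝ)+1) := by
          exact_mod_cast congrArg (Nat.cast : ℕ → ℝ) hc
        have : ((k:ℝ)+1)^(j+1) = ((k:ℝ)+1)^j * ((k:ℝ)+1) := by ring
        rw [this, pow_succ]
        linear_combination ((-1:ℝ)^k * ((k:ℝ)+1)^j) * hcr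
      rw [Finset.sum_congr rfl (by intro k hk; push_cast; exact key k hk)]
      rw [← Finset.mul_sum]
      have inner : ∑ k ∈ range (m'+1), (-1:ℝ)^k * (m'.choose k) * ((k:ℝ)+1)^j = 0 := by
        have expand : ∀ k : ℕ, ((k:ℝ)+1)^j = ∑ t ∈ range (j+1), (k:ℝ)^t * (j.choose t) := by
          intro k
          rw [add_pow]
          exact Finset.sum_congr rfl (fun t ht => by ring)
        calc ∑ k ∈ range (m'+1), (-1:ℝ)^k * (m'.choose k) * ((k:ℝ)+1)^j
            = ∑ k ∈ range (m'+1), ∑ t ∈ range (j+1), (j.choose t) * ((-1:ℝ)^k * (m'.choose k) * (k:ℝ)^t) := by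
              refine Finset.sum_congr rfl fun k hk => ?_
              rw [expand, Finset.mul_sum]
              exact Finset.sum_congr rfl (fun t ht => by ring)
          _ = ∑ t ∈ range (j+1), (j.choose t) * ∑ k ∈ range (m'+1), ((-1:ℝ)^k * (m'.choose k) * (k:ℝ)^t) := by
              rw [Finset.sum_comm]
              exact Finset.sum_congr rfl fun t ht => by rw [Finset.mul_sum]
          _ = 0 := by
              refine Finset.sum_eq_zero fun t ht => ?_
              have ht' := Finset.mem_range.mp ht
              rw [ih t (by omega) m' (by omega), mul_zero]
      rw [inner]
      ring




lemma FD (m j : ℕ) (hj : j < m) (x : ℝ) :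
    ∑ k ∈ range (m+1), (-1:ℝ)^k * (m.choose k) * (x + k)^j = 0 := by
  have expand : ∀ k : ℕ, (x + (k:ℝ))^j = ∑ t ∈ range (j+1), x^t * (j.choose (j-t)) * (k:ℝ)^(j-t) := by
    intro k
    rw [add_pow]
    refine Finset.sum_congr rfl fun t ht => ?_
    have ht' := Finset.mem_range.mp ht
    rw [Nat.choose_symm (by omega : t ≤ j)]
    ring
  calc ∑ k ∈ range (m+1), (-1:ℝ)^k * (m.choose k) * (x + k)^j
      = ∑ k ∈ range (m+1), ∑ t ∈ range (j+1), (x^t * (j.choose (j-t))) * ((-1:ℝ)^k * (m.choose k) * (k:ℝ)^(j-t)) := by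
        refine Finset.sum_congr rfl fun k hk => ?_
        rw [expand, Finset.mul_sum]
        exact Finset.sum_congr rfl (fun t ht => by ring)
    _ = ∑ t ∈ range (j+1), (x^t * (j.choose (j-t))) * ∑ k ∈ range (m+1), ((-1:ℝ)^k * (m.choose k) * (k:ℝ)^(j-t)) := by
        rw [Finset.sum_comm]
        exact Finset.sum_congr rfl fun t ht => by rw [Finset.mul_sum]
    _ = 0 := by
        refine Finset.sum_eq_zero fun t ht => ?_
        rw [momM (j-t) m (by omega), mul_zero]

open Finset


noncomputable def aterm (n k : ℕ) (x y : ℝ) : ℝ :=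
  if k = 0 then (y + n)^n
  else (n.choose k) * x * (x + k)^(k-1) * (y + ((n:ℝ) - k))^(n-k)

lemma abel : ∀ (n : ℕ) (x y : ℝ), ∑ k ∈ range (n+1), aterm n k x y = (x + y + n)^n := by
  intro n
  induction n with
  | zero => intro x y; simp [aterm]
  | succ n ih =>
    intro x y
    set φ : ℝ → ℝ := fun y => ∑ k ∈ range (n+2), aterm (n+1) k x y with hφdef
    set ψ : ℝ → ℝ := fun y => (x + y + ((n+1:ℕ):ℝ))^(n+1) with hψdef
    -- derivative of each term
    have hterm : ∀ (y : ℝ), ∀ k ∈ range (n+2), HasDerivAt (fun y => aterm (n+1) k x y)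
        ((n+1:ℝ) * (if k = n+1 then 0 else aterm n k x (y+1))) y := by
      intro y k hk
      have hk2 := Finset.mem_range.mp hk
      rcases Nat.eq_zero_or_pos k with rfl | hk1
      · have hfun : (fun y => aterm (n+1) 0 x y) = fun y : ℝ => (y + ((n+1:ℕ):ℝ))^(n+1) := by
          funext z; simp [aterm]
        rw [hfun]
        have h1 := ((hasDerivAt_id y).add_const ((n+1:ℕ):ℝ)).pow (n+1)
        refine h1.congr_deriv ?_
        symm
        rw [if_neg (by omega)]
        simp only [aterm, if_pos rfl, id_eq]
        push_cast
        ring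
      · have hfun : (fun y => aterm (n+1) k x y)
            = fun y : ℝ => (((n+1).choose k) * x * (x + k)^(k-1)) * (y + (((n+1:ℕ):ℝ) - k))^(n+1-k) := by
          funext z; rw [aterm, if_neg (by omega)]
        rw [hfun]
        have h1 := (((hasDerivAt_id y).add_const (((n+1:ℕ):ℝ) - k)).pow (n+1-k)).const_mul
          ((((n+1).choose k : ℝ)) * x * (x + k)^(k-1))
        refine h1.congr_deriv ?_
        symm
        rcases Nat.lt_or_ge k (n+1) with hlt | hge
        · rw [if_neg (by omega), aterm, if_neg (by omega)]
          have hc : (n.choose k) * (n + 1) = (n + 1).choose k * (n + 1 - k) := Nat.choose_mul_succ_eq n k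
          have hcr : ((n.choose k : ℝ)) * ((n:ℝ) + 1) = ((n + 1).choose k : ℝ) * ((n + 1 - k : ℕ) : ℝ) := by
            exact_mod_cast congrArg (Nat.cast : ℕ → ℝ) hc
          have he1 : n + 1 - k - 1 = n - k := by omega
          have he3 : (z : ℝ) → z + (((n+1:ℕ):ℝ) - k) = (z + 1) + ((n:ℝ) - k) := by
            intro z; push_cast; ring
          simp only [id_eq, he1, he3, mul_one]
          linear_combination ((x + (k:ℝ))^(k-1) * x * ((y+1) + ((n:ℝ) - k))^(n-k)) * hcr
        · have hk3 : k = n + 1 := by omega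
          subst hk3
          rw [if_pos rfl]
          simp
    have hder : ∀ (y : ℝ), HasDerivAt φ ((n+1:ℝ) * (x + (y+1) + n)^n) y := by
      intro y
      have h1 := HasDerivAt.fun_sum (hterm y)
      have h2 : ∑ k ∈ range (n+2), ((n+1:ℝ) * (if k = n+1 then 0 else aterm n k x (y+1)))
          = (n+1:ℝ) * (x + (y+1) + n)^n := by
        rw [← Finset.mul_sum, Finset.sum_range_succ, if_pos rfl, add_zero]
        rw [Finset.sum_congr rfl (fun k hk => by rw [if_neg (by have := Finset.mem_range.mp hk; omega)])]
        rw [ih x (y+1)]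
      rw [h2] at h1
      exact h1
    have hderψ : ∀ (y : ℝ), HasDerivAt ψ ((n+1:ℝ) * (x + (y+1) + n)^n) y := by
      intro y
      have hfun : ψ = fun y : ℝ => (y + (x + ((n+1:ℕ):ℝ)))^(n+1) := by
        funext z; rw [hψdef]; ring_nf
      rw [hfun]
      have h1 := ((hasDerivAt_id y).add_const (x + ((n+1:ℕ):ℝ))).pow (n+1)
      refine h1.congr_deriv ?_
      symm
      simp only [id_eq]
      push_cast
      ring
    -- φ - ψ is constant
    have hconst : ∀ y z : ℝ, φ y - ψ y = φ z - ψ z := by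
      have hdiff : Differentiable ℝ (fun y => φ y - ψ y) :=
        fun y => ((hder y).sub (hderψ y)).differentiableAt
      have hzero : ∀ y : ℝ, deriv (fun y => φ y - ψ y) y = 0 := by
        intro y
        have := ((hder y).sub (hderψ y))
        rw [sub_self] at this
        exact this.deriv
      exact is_const_of_deriv_eq_zero hdiff hzero
    -- evaluation at y₀
    set y₀ : ℝ := -x - ((n+1:ℕ):ℝ) with hy₀
    have hψ0 : ψ y₀ = 0 := by
      rw [hψdef]
      simp only
      rw [show x + y₀ + ((n+1:ℕ):ℝ) = 0 by rw [hy₀]; ring, zero_pow (by omega)]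
    have hφ0 : φ y₀ = 0 := by
      rw [hφdef]
      simp only
      have per : ∀ k ∈ range (n+2), aterm (n+1) k x y₀
          = ((-1:ℝ)^(n+1) * x) * ((-1:ℝ)^k * (((n+1).choose k : ℕ):ℝ) * (x + k)^n) := by
        intro k hk
        have hk2 := Finset.mem_range.mp hk
        rcases Nat.eq_zero_or_pos k with rfl | hk1
        · rw [aterm, if_pos rfl]
          rw [show y₀ + ((n+1:ℕ):ℝ) = -x by rw [hy₀]; ring, neg_pow]
          push_cast [Nat.choose_zero_right]
          ring
        · rw [aterm, if_neg (by omega)]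
          rw [show y₀ + (((n+1:ℕ):ℝ) - k) = -(x + k) by rw [hy₀]; push_cast; ring, neg_pow]
          have hpow : (x + k)^(k-1) * (x + k)^(n+1-k) = (x + k)^n := by
            rw [← pow_add]; congr 1; omega
          have hsgn : (-1:ℝ)^(n+1-k) * (-1:ℝ)^k = (-1:ℝ)^(n+1) := by
            rw [← pow_add]; congr 1; omega
          have hsq : (-1:ℝ)^k * (-1:ℝ)^k = 1 := by
            rw [← pow_add]; exact Even.neg_one_pow ⟨k, rfl⟩
          calc ((n+1).choose k : ℝ) * x * (x + k)^(k-1) * ((-1:ℝ)^(n+1-k) * (x + k)^(n+1-k))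
              = ((n+1).choose k : ℝ) * x * (-1:ℝ)^(n+1-k) * ((x + k)^(k-1) * (x + k)^(n+1-k)) := by ring
            _ = ((n+1).choose k : ℝ) * x * ((-1:ℝ)^(n+1-k) * ((-1:ℝ)^k * (-1:ℝ)^k)) * (x + k)^n := by
                rw [hpow, hsq]; ring
            _ = ((-1:ℝ)^(n+1) * x) * ((-1:ℝ)^k * (((n+1).choose k : ℕ):ℝ) * (x + k)^n) := by
                rw [← mul_assoc ((-1:ℝ)^(n+1-k)), hsgn]; ring
      rw [Finset.sum_congr rfl per, ← Finset.mul_sum, FD (n+1) n (by omega) x, mul_zero]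
    have := hconst y y₀
    rw [hφ0, hψ0, sub_zero] at this
    have hfin : φ y = ψ y := by linarith [this]
    calc ∑ k ∈ range (n+1+1), aterm (n+1) k x y = φ y := rfl
      _ = ψ y := hfin
      _ = (x + y + ((n+1:ℕ):ℝ))^(n+1) := rfl


lemma abel11 (n : ℕ) :
    ∑ k ∈ range (n+1), (n.choose k : ℝ) * ((k:ℝ)+1)^(k-1) * (((n-k:ℕ):ℝ)+1)^(n-k) = ((n:ℝ)+2)^n := by
  have h := abel n 1 1
  rw [show ((1:ℝ) + 1 + n) = (n:ℝ)+2 by ring] at h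
  rw [← h]
  refine Finset.sum_congr rfl fun k hk => ?_
  have hk' := Finset.mem_range.mp hk
  rcases Nat.eq_zero_or_pos k with rfl | hk1
  · simp [aterm]
    ring_nf
  · rw [aterm, if_neg (by omega)]
    have : ((1:ℝ) + ((n:ℝ) - k)) = ((n-k:ℕ):ℝ)+1 := by
      rw [Nat.cast_sub (by omega)]; ring
    rw [this]
    ring

lemma N2 (n : ℕ) (hn : 1 ≤ n) :
    ∑ k ∈ range (n+1), (n.choose k : ℝ) * ((k:ℝ)+1)^(k-1) * (((n-k:ℕ):ℝ)+1)^(n-k-1)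
      = 2 * ((n:ℝ)+2)^(n-1) := by
  have key : ((n:ℝ)+2) * ∑ k ∈ range (n+1), (n.choose k : ℝ) * ((k:ℝ)+1)^(k-1) * (((n-k:ℕ):ℝ)+1)^(n-k-1)
      = ((n:ℝ)+2) * (2 * ((n:ℝ)+2)^(n-1)) := by
    have split : ∀ k ∈ range (n+1),
        ((n:ℝ)+2) * ((n.choose k : ℝ) * ((k:ℝ)+1)^(k-1) * (((n-k:ℕ):ℝ)+1)^(n-k-1))
        = (n.choose k : ℝ) * ((k:ℝ)+1)^k * (((n-k:ℕ):ℝ)+1)^(n-k-1)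
          + (n.choose k : ℝ) * ((k:ℝ)+1)^(k-1) * (((n-k:ℕ):ℝ)+1)^(n-k) := by
      intro k hk
      have hk' := Finset.mem_range.mp hk
      have e1 : ((k:ℝ)+1)^k = ((k:ℝ)+1)^(k-1) * ((k:ℝ)+1) := by
        rcases Nat.eq_zero_or_pos k with rfl | h
        · norm_num
        · rw [← pow_succ]; congr 1; omega
      have e2 : (((n-k:ℕ):ℝ)+1)^(n-k) = (((n-k:ℕ):ℝ)+1)^(n-k-1) * (((n-k:ℕ):ℝ)+1) := by
        rcases Nat.eq_zero_or_pos (n-k) with h | h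
        · rw [h]; norm_num
        · rw [← pow_succ]; congr 1; omega
      have e3 : ((k:ℝ)+1) + (((n-k:ℕ):ℝ)+1) = (n:ℝ)+2 := by
        rw [Nat.cast_sub (by omega)]; ring
      rw [e1, e2, ← e3]
      ring
    rw [Finset.mul_sum, Finset.sum_congr rfl split, Finset.sum_add_distrib]
    have refl1 : ∑ k ∈ range (n+1), (n.choose k : ℝ) * ((k:ℝ)+1)^k * (((n-k:ℕ):ℝ)+1)^(n-k-1)
        = ∑ k ∈ range (n+1), (n.choose k : ℝ) * ((k:ℝ)+1)^(k-1) * (((n-k:ℕ):ℝ)+1)^(n-k) := by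
      rw [← Finset.sum_range_reflect (fun k => (n.choose k : ℝ) * ((k:ℝ)+1)^(k-1) * (((n-k:ℕ):ℝ)+1)^(n-k)) (n+1)]
      refine Finset.sum_congr rfl fun k hk => ?_
      have hk' := Finset.mem_range.mp hk
      have h1 : n + 1 - 1 - k = n - k := by omega
      have h2 : n - (n - k) = k := by omega
      rw [h1, Nat.choose_symm (by omega), h2]
      ring
    rw [refl1, abel11]
    have : ((n:ℝ)+2)^n = ((n:ℝ)+2)^(n-1) * ((n:ℝ)+2) := by
      rw [← pow_succ]; congr 1; omega
    rw [this]; ring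
  have hne : ((n:ℝ)+2) ≠ 0 := by positivity
  exact mul_left_cancel₀ hne key

noncomputable def uu (k : ℕ) : ℝ := 2^k * ((k:ℝ)+1)^(k-1) / (k.factorial)

lemma conv (n : ℕ) : (1 + 1/((n:ℝ)+1)) * ∑ k ∈ range (n+1), uu k * uu (n-k) = uu (n+1) := by
  rcases Nat.eq_zero_or_pos n with rfl | hn
  · norm_num [uu]
  · have step1 : ∀ k ∈ range (n+1), uu k * uu (n-k)
        = 2^n * ((n.choose k : ℝ) * ((k:ℝ)+1)^(k-1) * (((n-k:ℕ):ℝ)+1)^(n-k-1)) / (n.factorial) := by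
      intro k hk
      have hk' := Finset.mem_range.mp hk
      have hfact : (n.factorial : ℝ) = (n.choose k) * k.factorial * (n-k).factorial := by
        exact_mod_cast (Nat.choose_mul_factorial_mul_factorial (by omega : k ≤ n)).symm
      have h2 : (2:ℝ)^k * 2^(n-k) = 2^n := by rw [← pow_add]; congr 1; omega
      rw [uu, uu, div_mul_div_comm, hfact]
      have hk0 : (k.factorial : ℝ) ≠ 0 := by positivity
      have hnk0 : ((n-k).factorial : ℝ) ≠ 0 := by positivity
      have hc0 : ((n.choose k : ℕ) : ℝ) ≠ 0 := by
        have := Nat.choose_pos (by omega : k ≤ n); positivity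
      field_simp
      linear_combination h2
    rw [Finset.sum_congr rfl step1, ← Finset.sum_div, ← Finset.mul_sum, N2 n hn]
    rw [uu]
    have h3 : ((n:ℝ)+1) ≠ 0 := by positivity
    have h4 : ((n.factorial : ℕ) : ℝ) ≠ 0 := by positivity
    have h5 : ((n+1:ℕ):ℝ)+1 = (n:ℝ)+2 := by push_cast; ring
    have h6 : (n+1) - 1 = n := by omega
    have h7 : ((n+1).factorial : ℝ) = ((n:ℝ)+1) * n.factorial := by
      rw [Nat.factorial_succ]; push_cast; ring
    rw [h5, h6, h7]
    have h8 : ((n:ℝ)+2)^n = ((n:ℝ)+2)^(n-1) * ((n:ℝ)+2) := by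
      rw [← pow_succ]; congr 1; omega
    have h9 : (2:ℝ)^(n+1) = 2^n * 2 := by rw [pow_succ]
    rw [h8, h9]
    field_simp
    ring

instance : Unique {T : BinTree // T.size = 0} where
  default := ⟨.nil, rfl⟩
  uniq := by
    rintro ⟨T, hT⟩
    cases T with
    | nil => rfl
    | node l r => simp [BinTree.size] at hT

def eqSucc (n : ℕ) : {T : BinTree // T.size = n+1} ≃
    (Σ k : Fin (n+1), {l : BinTree // l.size = k.1} × {r : BinTree // r.size = n - k.1}) where
  toFun T :=
    match T with
    | ⟨.nil, h⟩ => absurd h (by simp [BinTree.size])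
    | ⟨.node l r, h⟩ =>
      ⟨⟨l.size, by simp [BinTree.size] at h; omega⟩, ⟨l, rfl⟩,
        ⟨r, by simp [BinTree.size] at h; show r.size = n - l.size; omega⟩⟩
  invFun := fun ⟨⟨k, hk⟩, ⟨l, hl⟩, ⟨r, hr⟩⟩ => ⟨.node l r, by
    simp only [Fin.val_mk] at hl hr
    simp [BinTree.size, hl, hr]
    omega⟩
  left_inv := by rintro ⟨T, h⟩; cases T with
    | nil => exact absurd h (by simp [BinTree.size])
    | node l r => rfl
  right_inv := by
    rintro ⟨⟨k, hk⟩, ⟨l, hl⟩, ⟨r, hr⟩⟩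
    simp only [Fin.val_mk] at hl hr
    subst hl
    rfl

instance bintreeFinite : ∀ n, Finite {T : BinTree // T.size = n} := by
  intro n
  induction n using Nat.strong_induction_on with
  | _ n ih =>
    match n with
    | 0 => infer_instance
    | n+1 =>
      haveI : ∀ k : Fin (n+1), Finite {l : BinTree // l.size = k.1} := fun k => ih k.1 (by omega)
      haveI : ∀ k : Fin (n+1), Finite {r : BinTree // r.size = n - k.1} := fun k => ih (n - k.1) (by omega)
      exact Finite.of_equiv _ (eqSucc n).symm

noncomputable def w (T : BinTree) : ℝ := (T.hooks.map (fun h : ℕ => 1 + 1/(h:ℝ))).prod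

lemma w_nil : w .nil = 1 := by simp [w, BinTree.hooks]

lemma w_node (l r : BinTree) :
    w (.node l r) = (1 + 1/((l.size + r.size + 1 : ℕ):ℝ)) * (w l * w r) := by
  simp [w, BinTree.hooks, BinTree.size, Multiset.prod_map_add]

noncomputable def g (n : ℕ) : ℝ := ∑' T : {T : BinTree // T.size = n}, w T.1

lemma g0 : g 0 = 1 := by
  rw [g, tsum_eq_single (default : {T : BinTree // T.size = 0})
    (fun b' hb' => absurd (Subsingleton.elim b' default) hb')]
  exact w_nil

lemma grec (n : ℕ) : g (n+1) = (1 + 1/((n+1:ℕ):ℝ)) * ∑ k ∈ range (n+1), g k * g (n-k) := by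
  classical
  haveI I1 : ∀ k : Fin (n+1), Fintype {l : BinTree // l.size = k.1} := fun k => Fintype.ofFinite _
  haveI I2 : ∀ k : Fin (n+1), Fintype {r : BinTree // r.size = n - k.1} := fun k => Fintype.ofFinite _
  haveI I3 : Fintype {T : BinTree // T.size = n+1} := Fintype.ofFinite _
  have hg : ∀ k : Fin (n+1), g k.1 = ∑ l : {l : BinTree // l.size = k.1}, w l.1 := fun k => tsum_fintype _
  have hg' : ∀ k : Fin (n+1), g (n - k.1) = ∑ r : {r : BinTree // r.size = n - k.1}, w r.1 :=
    fun k => tsum_fintype _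
  have per : ∀ (k : Fin (n+1)) (l : {l : BinTree // l.size = k.1}) (r : {r : BinTree // r.size = n - k.1}),
      w (((eqSucc n).symm ⟨k, (l, r)⟩).1) = (1 + 1/((n+1:ℕ):ℝ)) * (w l.1 * w r.1) := by
    intro k l r
    have h1 : ((eqSucc n).symm ⟨k, (l, r)⟩).1 = BinTree.node l.1 r.1 := rfl
    rw [h1, w_node]
    have h2 : l.1.size + r.1.size + 1 = n + 1 := by
      have := l.2; have := r.2; have := k.2; omega
    rw [h2]
  calc g (n+1) = ∑' s : (Σ k : Fin (n+1), {l : BinTree // l.size = k.1} × {r : BinTree // r.size = n - k.1}),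
        w (((eqSucc n).symm s).1) := by
        rw [g, ← Equiv.tsum_eq (eqSucc n).symm (fun T => w T.1)]
    _ = ∑ s : (Σ k : Fin (n+1), {l : BinTree // l.size = k.1} × {r : BinTree // r.size = n - k.1}),
        w (((eqSucc n).symm s).1) := tsum_fintype _
    _ = ∑ k : Fin (n+1), ∑ p : {l : BinTree // l.size = k.1} × {r : BinTree // r.size = n - k.1},
        w (((eqSucc n).symm ⟨k, p⟩).1) := by
        rw [← Finset.univ_sigma_univ, Finset.sum_sigma]
    _ = ∑ k : Fin (n+1), (1 + 1/((n+1:ℕ):ℝ)) * ((∑ l : {l : BinTree // l.size = k.1}, w l.1)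
          * (∑ r : {r : BinTree // r.size = n - k.1}, w r.1)) := by
        refine Finset.sum_congr rfl fun k _ => ?_
        rw [Fintype.sum_prod_type]
        rw [Finset.sum_congr rfl (fun l _ => Finset.sum_congr rfl (fun r _ => per k l r))]
        rw [Finset.sum_mul_sum]
        rw [Finset.mul_sum]
        exact Finset.sum_congr rfl fun l _ => by rw [Finset.mul_sum]
    _ = (1 + 1/((n+1:ℕ):ℝ)) * ∑ k : Fin (n+1), g k.1 * g (n - k.1) := by
        rw [Finset.mul_sum]
        exact Finset.sum_congr rfl fun k _ => by rw [hg, hg']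
    _ = (1 + 1/((n+1:ℕ):ℝ)) * ∑ k ∈ range (n+1), g k * g (n-k) := by
        rw [Fin.sum_univ_eq_sum_range (fun k => g k * g (n-k)) (n+1)]

lemma gval : ∀ n, g n = uu n := by
  intro n
  induction n using Nat.strong_induction_on with
  | _ n ih =>
    match n with
    | 0 => rw [g0]; norm_num [uu]
    | n+1 =>
      rw [grec n, Finset.sum_congr rfl (fun k hk => by
        have hk' := Finset.mem_range.mp hk
        rw [ih k (by omega), ih (n-k) (by omega)])]
      have : ((n+1:ℕ):ℝ) = (n:ℝ)+1 := by push_cast; ring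
      rw [this, conv n]

lemma hooks_ge_one : ∀ (T : BinTree), ∀ h ∈ T.hooks, 1 ≤ h := by
  intro T
  induction T with
  | nil => simp [BinTree.hooks]
  | node l r ihl ihr =>
    intro h hm
    rw [BinTree.hooks, Multiset.mem_cons] at hm
    rcases hm with h1 | h2
    · rw [h1, BinTree.size]; omega
    · rw [Multiset.mem_add] at h2
      rcases h2 with h3 | h3
      · exact ihl h h3
      · exact ihr h h3

/-- Han's Theorem 1 at `z = 1` recovers Postnikov's hook length formula:
the weighted sum equals `2^n (n+1)^(n-1)/n!`, and each
factor `(1+h)^(h-1)/(h(h+1)^(h-2))` simplifies to `1 + 1/h`. -/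
theorem han_at_one (n : ℕ) (hn : 1 ≤ n) :
    (∑' T : {T : BinTree // T.size = n},
      ((T.1.hooks).map (fun (h : ℕ) =>
        ((1 : ℝ) + h) ^ (h - 1) / (h * ((h : ℝ) + 1) ^ ((h : ℤ) - 2)))).prod
      = 2 ^ n * ((n : ℝ) + 1) ^ (n - 1) / (Nat.factorial n : ℝ)) ∧
    ∀ h : ℕ, 1 ≤ h →
      ((1 : ℝ) + h) ^ (h - 1) / (h * ((h : ℝ) + 1) ^ ((h : ℤ) - 2))
        = 1 + 1 / h := by
  have factor_eq : ∀ h : ℕ, 1 ≤ h →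
      ((1 : ℝ) + h) ^ (h - 1) / (h * ((h : ℝ) + 1) ^ ((h : ℤ) - 2)) = 1 + 1 / h := by
    intro h hh
    have h0 : (0:ℝ) < (h:ℝ) := by exact_mod_cast hh
    have h1 : ((h:ℝ) + 1) ≠ 0 := by positivity
    have hz : (h:ℤ) - 2 = ((h - 1 : ℕ) : ℤ) + (-1) := by omega
    rw [hz, zpow_add₀ h1, zpow_natCast, zpow_neg_one]
    have h2 : ((h:ℝ) + 1) ^ (h-1) ≠ 0 := by positivity
    rw [show ((1:ℝ) + h) = (h:ℝ) + 1 by ring]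
    field_simp
  constructor
  · calc (∑' T : {T : BinTree // T.size = n},
        ((T.1.hooks).map (fun (h : ℕ) =>
          ((1 : ℝ) + h) ^ (h - 1) / (h * ((h : ℝ) + 1) ^ ((h : ℤ) - 2)))).prod)
        = ∑' T : {T : BinTree // T.size = n}, w T.1 := by
          refine tsum_congr fun T => ?_
          unfold w
          exact congrArg Multiset.prod
            (Multiset.map_congr rfl fun h hm => factor_eq h (hooks_ge_one T.1 h hm))
      _ = g n := rfl
      _ = uu n := gval n
      _ = 2 ^ n * ((n : ℝ) + 1) ^ (n - 1) / (Nat.factorial n : ℝ) := rfl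
  · exact factor_eq
end
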